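/- Let n = sm with s even, s/2 odd and m odd. Let k be an integer with gcd(k,n)=2, and let f be a permutation of F_{2^s} that is differentially at most 6-uniform on F_{2^s}. Then the function F defined by F(x)=f(x) for x ∈ F_{2^s} and F(x)=x^{2^k+1} for x ∉ F_{2^s} is a permutation of F_{2^n} with differential uniformity at most 6. -/

import Mathlib

private lemma pow_pow_mul {F : Type*} [Field F] (x : F) (a q : ℕ) (ha : x ^ 2 ^ a = x) :
    x ^ 2 ^ (a * q) = x := by
  induction q with
  | zero => simp
  | succ q ih => rw [Nat.mul_succ, pow_add, pow_mul, ih, ha]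

private lemma pow_pow_gcd {F : Type*} [Field F] (x : F) :
    ∀ a b : ℕ, x ^ 2 ^ a = x → x ^ 2 ^ b = x → x ^ 2 ^ Nat.gcd a b = x := by
  intro a
  induction a using Nat.strong_induction_on with
  | _ a ih =>
    intro b ha hb
    rcases Nat.eq_zero_or_pos a with rfl | hpos
    · simpa using hb
    · have hmod : x ^ 2 ^ (b % a) = x := by
        calc x ^ 2 ^ (b % a) = (x ^ 2 ^ (a * (b / a))) ^ 2 ^ (b % a) := by
              rw [pow_pow_mul x a (b / a) ha]
          _ = x ^ (2 ^ (a * (b / a)) * 2 ^ (b % a)) := by rw [pow_mul x]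
          _ = x ^ 2 ^ (a * (b / a) + b % a) := by rw [pow_add]
          _ = x := by rw [Nat.div_add_mod]; exact hb
      rw [Nat.gcd_rec]
      exact ih (b % a) (Nat.mod_lt _ hpos) a hmod ha

private lemma ncard_quartic_le (F : Type*) [Field F] : ({ω : F | ω ^ (4:ℕ) = ω}).ncard ≤ 4 := by
  haveI := Classical.decEq F
  have hsub : {ω : F | ω ^ (4:ℕ) = ω} ⊆ ({0} : Set F) ∪ ↑((Polynomial.nthRoots 3 (1 : F)).toFinset) := by
    intro ω hω
    rcases eq_or_ne ω 0 with rfl | hω0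
    · exact Or.inl rfl
    · right
      rw [Finset.mem_coe, Multiset.mem_toFinset, Polynomial.mem_nthRoots (by norm_num)]
      have h1 : ω ^ (3:ℕ) * ω = 1 * ω := by
        rw [one_mul, ← pow_succ]; exact hω
      exact mul_right_cancel₀ hω0 h1
  have hfin : (({0} : Set F) ∪ ↑((Polynomial.nthRoots 3 (1 : F)).toFinset)).Finite :=
    (Set.finite_singleton 0).union (Finset.finite_toSet _)
  calc ({ω : F | ω ^ (4:ℕ) = ω}).ncard
      ≤ (({0} : Set F) ∪ ↑((Polynomial.nthRoots 3 (1 : F)).toFinset)).ncard :=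
        Set.ncard_le_ncard hsub hfin
    _ ≤ (({0} : Set F)).ncard + (↑((Polynomial.nthRoots 3 (1 : F)).toFinset) : Set F).ncard :=
        Set.ncard_union_le _ _
    _ ≤ 1 + 3 := by
        gcongr
        · simp
        · rw [Set.ncard_coe_finset]
          exact le_trans (Multiset.toFinset_card_le _) (Polynomial.card_nthRoots 3 1)
    _ ≤ 4 := by norm_num

/-- `delta f a b` is the number of `x` with `f (x + a) + f x = b`. -/
noncomputable def delta {F : Type*} [Field F] (f : F → F) (a b : F) : ℕ :=
  Nat.card {x : F // f (x + a) + f x = b}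

/-- `deltaOn S f a b` is the number of `x ∈ S` with `f (x + a) + f x = b`. -/
noncomputable def deltaOn {F : Type*} [Field F] (S : Set F) (f : F → F) (a b : F) : ℕ :=
  Nat.card {x : F // x ∈ S ∧ f (x + a) + f x = b}

/-- Let `n = s·m` with `s` even, `s/2` odd and `m` odd, and `gcd(k,n) = 2`.
Let `F = F_{2^n}`, `S = F_{2^s}`, and let `f` be a permutation of `S` which is differentially
at most 6-uniform on `S`. Then the piecewise function `Fn` (equal to `f` on `S` and to the
Gold function `x^(2^k + 1)` off `S`) is a permutation of `F` with differential uniformity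
at most 6. -/
theorem stmt3 {F : Type*} [Field F] [Fintype F] (n s m k : ℕ)
    (hn : n = s * m) (hs : Even s) (hs2 : Odd (s / 2)) (hm : Odd m)
    (hk : Nat.gcd k n = 2) (hcard : Fintype.card F = 2 ^ n)
    (S : Set F) (hS : S = {x : F | x ^ (2 ^ s) = x})
    (f : F → F) (hfperm : Set.BijOn f S S)
    (hf6 : ∀ a ∈ S, a ≠ 0 → ∀ b ∈ S, deltaOn S f a b ≤ 6)
    (Fn : F → F)
    (hFn1 : ∀ x ∈ S, Fn x = f x) (hFn2 : ∀ x ∉ S, Fn x = x ^ (2 ^ k + 1)) :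
    Function.Bijective Fn ∧ ∀ a b : F, a ≠ 0 → delta Fn a b ≤ 6 := by
  classical
  -- arithmetic setup
  obtain ⟨sh, hsh⟩ := hs
  obtain ⟨c, hc⟩ := hs2
  obtain ⟨d, hd⟩ := hm
  have hst : s = 2 * sh := by omega
  have hshodd : sh = 2 * c + 1 := by omega
  have hnval : n = 4 * (2*c*d + c + d) + 2 := by rw [hn, hst, hshodd, hd]; ring
  -- characteristic 2
  have hchar2 : CharP F 2 := by
    obtain ⟨p, hpc⟩ := CharP.exists F
    haveI := hpc
    obtain ⟨j, hpprime, hcard'⟩ := FiniteField.card F p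
    have hp2 : p = 2 := by
      have hdvd : p ∣ 2 ^ n := by
        rw [← hcard, hcard']
        exact dvd_pow_self p (by exact_mod_cast j.pos.ne')
      have h2 := Nat.Prime.dvd_of_dvd_pow hpprime hdvd
      exact (Nat.prime_dvd_prime_iff_eq hpprime Nat.prime_two).mp h2
    rwa [hp2] at hpc
  haveI := hchar2
  haveI : Fact (Nat.Prime 2) := ⟨Nat.prime_two⟩
  have htwo : (2 : F) = 0 := CharTwo.two_eq_zero
  have hFq : ∀ x : F, x ^ 2 ^ n = x := fun x => by rw [← hcard]; exact FiniteField.pow_card x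
  set ψ : F →+* F := iterateFrobenius F 2 s with hψdef
  have hψ : ∀ x : F, ψ x = x ^ 2 ^ s := fun x => rfl
  have hmem : ∀ x : F, x ∈ S ↔ ψ x = x := by
    intro x; rw [hS, hψ]; exact Iff.rfl
  have hS0 : (0:F) ∈ S := (hmem 0).mpr (map_zero ψ)
  have hSadd : ∀ {x y : F}, x ∈ S → y ∈ S → x + y ∈ S := by
    intro x y hx hy
    exact (hmem _).mpr (by rw [map_add, (hmem x).1 hx, (hmem y).1 hy])
  have hSmul : ∀ {x y : F}, x ∈ S → y ∈ S → x * y ∈ S := by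
    intro x y hx hy
    exact (hmem _).mpr (by rw [map_mul, (hmem x).1 hx, (hmem y).1 hy])
  have hSinv : ∀ {x : F}, x ∈ S → x⁻¹ ∈ S := by
    intro x hx
    exact (hmem _).mpr (by rw [map_inv₀, (hmem x).1 hx])
  have hSpow : ∀ {x : F}, x ∈ S → ∀ j : ℕ, x ^ j ∈ S := by
    intro x hx j
    exact (hmem _).mpr (by rw [map_pow, (hmem x).1 hx])
  have hfS : ∀ x ∈ S, f x ∈ S := fun x hx => hfperm.mapsTo hx
  have h4 : ∀ t : F, t ^ 2 ^ k = t → t ^ (4:ℕ) = t := by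
    intro t htk
    have h := pow_pow_gcd t k n htk (hFq t)
    rw [hk] at h
    norm_num at h
    exact h
  have h4S : ∀ t : F, t ^ (4:ℕ) = t → t ∈ S := by
    intro t ht
    have h22 : t ^ 2 ^ 2 = t := by norm_num; exact ht
    have := pow_pow_mul t 2 sh h22
    rw [← hst] at this
    rw [hS]; exact this
  have hgold : ∀ x y : F, (x + y) ^ (2^k+1)
      = x ^ (2^k+1) + y * x ^ 2^k + y ^ 2^k * x + y ^ (2^k+1) := by
    intro x y
    have h1 : (x + y) ^ 2 ^ k = x ^ 2^k + y ^ 2^k := add_pow_char_pow x y 2 k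
    calc (x+y)^(2^k+1) = (x+y)^2^k * (x+y) := by rw [pow_succ]
      _ = (x ^ 2^k + y ^ 2^k) * (x+y) := by rw [h1]
      _ = x ^ (2^k+1) + y * x ^ 2^k + y ^ 2^k * x + y ^ (2^k+1) := by ring
  have hker : ∀ a z : F, a ≠ 0 → a * z ^ 2^k + a ^ 2^k * z = 0 →
      ∃ ω : F, ω ^ (4:ℕ) = ω ∧ z = a * ω := by
    intro a z ha h
    have haz : a * z ^ 2^k = a ^ 2^k * z := by
      linear_combination h - a ^ 2^k * z * htwo
    refine ⟨z * a⁻¹, ?_, by field_simp⟩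
    refine h4 _ ?_
    have hne : (a : F) ^ 2^k ≠ 0 := pow_ne_zero _ ha
    rw [mul_pow, inv_pow]
    field_simp
    linear_combination haz
  have hσ : ∀ x z : F, z ∈ S → ψ x = x + z → z = 0 := by
    intro x z hzS hxz
    have hzψ : ψ z = z := (hmem z).1 hzS
    have hiter : ∀ j : ℕ, ψ^[j] x = x + j • z := by
      intro j; induction j with
      | zero => simp
      | succ j ih =>
        rw [Function.iterate_succ_apply', ih, map_add, hxz, map_nsmul, hzψ, succ_nsmul]
        ring
    have hiter2 : ∀ j : ℕ, ψ^[j] x = x ^ 2 ^ (s * j) := by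
      intro j; induction j with
      | zero => simp
      | succ j ih =>
        rw [Function.iterate_succ_apply', ih, hψ, ← pow_mul, ← pow_add, Nat.mul_succ]
    have hm0 : x + m • z = x := by
      rw [← hiter, hiter2, ← hn]
      exact hFq x
    have hz0 : m • z = 0 := by
      have := add_eq_left.mp hm0
      exact this
    have hcast : ((m : ℕ) : F) = 1 := by rw [hd]; push_cast; rw [htwo]; ring
    rwa [nsmul_eq_mul, hcast, one_mul] at hz0
  have hcross : ∀ {a x : F}, a ∉ S → x ∈ S → x + a ∉ S := by
    intro a x haS hxS h
    apply haS
    have h2 : (x + a) + x ∈ S := hSadd h hxS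
    have h3 : (x + a) + x = a := by linear_combination x * htwo
    rwa [h3] at h2
  have hcross2 : ∀ {a x : F}, a ∈ S → x ∉ S → x + a ∉ S := by
    intro a x haS hxS h
    apply hxS
    have h2 : (x + a) + a ∈ S := hSadd h haS
    have h3 : (x + a) + a = x := by linear_combination a * htwo
    rwa [h3] at h2
  -- gcd facts
  have hkeven : 2 ∣ k := hk ▸ Nat.gcd_dvd_left k n
  have hgcd2k : Nat.gcd (2*k) n = 2 := by
    have h1 := Nat.gcd_dvd_gcd_mul_left_left k n 2
    rw [hk] at h1
    have h2 : Nat.gcd (2*k) n ∣ 4 := by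
      have h3 : Nat.gcd (2*k) n ∣ Nat.gcd (2*k) (2*n) := Nat.gcd_dvd_gcd_mul_left_right (2*k) n 2
      rwa [Nat.gcd_mul_left, hk] at h3
    have hdn : Nat.gcd (2*k) n ∣ n := Nat.gcd_dvd_right _ _
    have h2' : Nat.gcd (2*k) n ∣ 2^2 := by norm_num; exact h2
    obtain ⟨i, hi2, hieq⟩ := (Nat.dvd_prime_pow Nat.prime_two).mp h2'
    interval_cases i
    · rw [hieq] at h1; norm_num at h1
    · simpa using hieq
    · exfalso
      rw [hieq] at hdn
      norm_num at hdn
      omega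
  have hcop3 : Nat.gcd 3 (2^k+1) = 1 := by
    obtain ⟨t, ht⟩ := hkeven
    have h4t : (2:ℕ)^k = 4^t := by rw [ht, pow_mul]; norm_num
    have hmod : 4^t % 3 = 1 := by
      rw [Nat.pow_mod]; norm_num
    have hmod2 : (2^k+1) % 3 = 2 := by rw [h4t]; omega
    have h3 : ¬ (3 ∣ 2^k+1) := by omega
    exact (Nat.Prime.coprime_iff_not_dvd Nat.prime_three).mpr h3
  have hginj : Function.Injective (fun x : F => x ^ (2^k+1)) := by
    intro x y hxy
    simp only at hxy
    rcases eq_or_ne y 0 with rfl | hy0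
    · have h0 : x ^ (2^k+1) = 0 := by simpa using hxy
      exact pow_eq_zero_iff (Nat.succ_ne_zero _) |>.mp h0
    · have hx0 : x ≠ 0 := by
        intro h
        rw [h, zero_pow (Nat.succ_ne_zero _)] at hxy
        exact hy0 (pow_eq_zero_iff (Nat.succ_ne_zero _) |>.mp hxy.symm)
      set u : F := x * y⁻¹ with hu
      have hu0 : u ≠ 0 := mul_ne_zero hx0 (inv_ne_zero hy0)
      have hu1 : u ^ (2^k+1) = 1 := by
        rw [hu, mul_pow, inv_pow, hxy]
        field_simp
      have he : (2^k+1) * (2^k-1) + 1 = 2^(2*k) := by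
        have h1 : 1 ≤ (2:ℕ)^k := Nat.one_le_two_pow
        obtain ⟨r, hr⟩ : ∃ r, (2:ℕ)^k = r + 1 := ⟨2^k-1, by omega⟩
        have h2 : (2:ℕ)^(2*k) = 2^k * 2^k := by rw [two_mul, pow_add]
        rw [h2, hr, Nat.add_sub_cancel]
        ring
      have hu2 : u ^ 2 ^ (2*k) = u := by
        calc u ^ 2 ^ (2*k) = u ^ ((2^k+1) * (2^k-1) + 1) := by rw [he]
          _ = (u ^ (2^k+1))^(2^k-1) * u := by rw [pow_succ, pow_mul]
          _ = u := by rw [hu1, one_pow, one_mul]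
      have hu4 : u ^ (4:ℕ) = u := by
        have h := pow_pow_gcd u (2*k) n hu2 (hFq u)
        rw [hgcd2k] at h
        norm_num at h
        exact h
      have hu3 : u ^ (3:ℕ) = 1 := by
        have h1 : u ^ (3:ℕ) * u = 1 * u := by rw [one_mul, ← pow_succ]; exact hu4
        exact mul_right_cancel₀ hu0 h1
      have huone : u = 1 := by
        have h := pow_gcd_eq_one.mpr ⟨hu3, hu1⟩
        rwa [hcop3, pow_one] at h
      rw [hu, mul_inv_eq_one₀ hy0] at huone
      exact huone
  have hgS : ∀ x : F, x ^ (2^k+1) ∈ S → x ∈ S := by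
    intro x hx
    have h1 : ψ (x ^ (2^k+1)) = x ^ (2^k+1) := (hmem _).1 hx
    rw [map_pow] at h1
    have h2 : ψ x = x := hginj h1
    exact (hmem x).2 h2
  have hsolS : ∀ a ∈ S, a ≠ 0 → ∀ dd ∈ S, ∀ x : F,
      a * x ^ 2^k + a ^ 2^k * x = dd → x ∈ S := by
    intro a haS ha0 dd hddS x hx
    have hψa : ψ a = a := (hmem a).1 haS
    have hψd : ψ dd = dd := (hmem dd).1 hddS
    have hx2 : a * (ψ x) ^ 2^k + a ^ 2^k * (ψ x) = dd := by
      have h := congrArg ψ hx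
      simpa [map_add, map_mul, map_pow, hψa, hψd] using h
    set z : F := ψ x + x with hz
    have hzp : z ^ 2^k = (ψ x) ^ 2^k + x ^ 2^k := by
      rw [hz]; exact add_pow_char_pow (ψ x) x 2 k
    have hzker : a * z ^ 2^k + a ^ 2^k * z = 0 := by
      linear_combination a * hzp + a^(2^k) * hz + hx2 + hx + dd * htwo
    have hzS : z ∈ S := by
      obtain ⟨ω, hω4, hωz⟩ := hker a z ha0 hzker
      exact hωz ▸ hSmul haS (h4S ω hω4)
    have hz0 : z = 0 := hσ x z hzS (by linear_combination (-x) * htwo)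
    have hψx : ψ x = x := by linear_combination hz0 - x * htwo
    exact (hmem x).2 hψx
  have hLbound : ∀ a : F, a ≠ 0 → ∀ dd : F,
      ({x : F | a * x ^ 2^k + a ^ 2^k * x = dd}).ncard ≤ 4 := by
    intro a ha dd
    rcases Set.eq_empty_or_nonempty {x : F | a * x ^ 2^k + a ^ 2^k * x = dd} with he | ⟨x0, hx0⟩
    · rw [he]; simp
    · have hsub : {x : F | a * x ^ 2^k + a ^ 2^k * x = dd}
          ⊆ (fun ω : F => x0 + a * ω) '' {ω : F | ω ^ (4:ℕ) = ω} := by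
        intro x hx
        simp only [Set.mem_setOf_eq] at hx hx0
        have hcc : (x + x0) ^ 2^k = x ^ 2^k + x0 ^ 2^k := add_pow_char_pow x x0 2 k
        have hk0 : a * (x + x0) ^ 2^k + a ^ 2^k * (x + x0) = 0 := by
          linear_combination hx - hx0 + a * hcc + (a^(2^k) * x0 + a * x0^(2^k)) * htwo
        obtain ⟨ω, hω4, hωe⟩ := hker a (x + x0) ha hk0
        exact ⟨ω, hω4, by linear_combination (-1) * hωe + x0 * htwo⟩
      calc ({x : F | a * x ^ 2^k + a ^ 2^k * x = dd}).ncard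
          ≤ ((fun ω : F => x0 + a * ω) '' {ω : F | ω ^ (4:ℕ) = ω}).ncard :=
            Set.ncard_le_ncard hsub (Set.toFinite _)
        _ ≤ ({ω : F | ω ^ (4:ℕ) = ω}).ncard := Set.ncard_image_le (Set.toFinite _)
        _ ≤ 4 := ncard_quartic_le F
  have hnotSu : ∀ a : F, a ∉ S → ψ a + a ∉ S := by
    intro a haS hmemu
    apply haS
    have h1 : ψ (ψ a + a) = ψ a + a := (hmem _).1 hmemu
    rw [map_add] at h1
    have h2 : ψ (ψ a) = a := by linear_combination h1
    have h3 : a ^ 2 ^ (2 * s) = a := by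
      have : ψ (ψ a) = a ^ 2 ^ (2 * s) := by
        rw [hψ, hψ, ← pow_mul, ← pow_add, two_mul]
      rw [← this]; exact h2
    have h4' := pow_pow_gcd a (2*s) n h3 (hFq a)
    have hg2s : Nat.gcd (2*s) n = s := by
      rw [hn, mul_comm 2 s, Nat.gcd_mul_left]
      have hcop : Nat.gcd 2 m = 1 :=
        (Nat.Prime.coprime_iff_not_dvd Nat.prime_two).mpr (by omega)
      rw [hcop, mul_one]
    rw [hg2s] at h4'
    rw [hS]; exact h4'
  -- bijectivity
  have hFinj : Function.Injective Fn := by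
    intro x y hxy
    by_cases hxS : x ∈ S <;> by_cases hyS : y ∈ S
    · exact hfperm.injOn hxS hyS (by rwa [← hFn1 x hxS, ← hFn1 y hyS])
    · exfalso
      rw [hFn1 x hxS, hFn2 y hyS] at hxy
      exact hyS (hgS y (hxy ▸ hfS x hxS))
    · exfalso
      rw [hFn2 x hxS, hFn1 y hyS] at hxy
      exact hxS (hgS x (hxy.symm ▸ hfS y hyS))
    · rw [hFn2 x hxS, hFn2 y hyS] at hxy
      exact hginj hxy
  refine ⟨Finite.injective_iff_bijective.1 hFinj, ?_⟩
  intro a b ha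
  have hdelta : delta Fn a b = ({x : F | Fn (x + a) + Fn x = b}).ncard :=
    Nat.card_coe_set_eq _
  rw [hdelta]
  by_cases haS : a ∈ S
  · by_cases hbS : b ∈ S
    · -- a ∈ S, b ∈ S : bounded by deltaOn
      have hsub : {x : F | Fn (x + a) + Fn x = b} ⊆ {x : F | x ∈ S ∧ f (x + a) + f x = b} := by
        intro x hx
        simp only [Set.mem_setOf_eq] at hx ⊢
        by_cases hxS : x ∈ S
        · have hxa : x + a ∈ S := hSadd hxS haS
          rw [hFn1 _ hxa, hFn1 _ hxS] at hx
          exact ⟨hxS, hx⟩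
        · exfalso
          have hxaS : x + a ∉ S := hcross2 haS hxS
          rw [hFn2 _ hxaS, hFn2 _ hxS] at hx
          have heq : a * x ^ 2^k + a ^ 2^k * x = b + a^(2^k+1) := by
            linear_combination hx - hgold x a - (x^(2^k+1) + a^(2^k+1)) * htwo
          exact hxS (hsolS a haS ha (b + a^(2^k+1)) (hSadd hbS (hSpow haS _)) x heq)
      calc ({x : F | Fn (x + a) + Fn x = b}).ncard
          ≤ ({x : F | x ∈ S ∧ f (x + a) + f x = b}).ncard :=
            Set.ncard_le_ncard hsub (Set.toFinite _)
        _ = deltaOn S f a b := (Nat.card_coe_set_eq _).symm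
        _ ≤ 6 := hf6 a haS ha b hbS
    · -- a ∈ S, b ∉ S : at most 4 solutions
      have hsub : {x : F | Fn (x + a) + Fn x = b}
          ⊆ {x : F | a * x ^ 2^k + a ^ 2^k * x = b + a^(2^k+1)} := by
        intro x hx
        simp only [Set.mem_setOf_eq] at hx ⊢
        by_cases hxS : x ∈ S
        · exfalso
          have hxa : x + a ∈ S := hSadd hxS haS
          rw [hFn1 _ hxa, hFn1 _ hxS] at hx
          exact hbS (hx ▸ hSadd (hfS _ hxa) (hfS _ hxS))
        · have hxaS : x + a ∉ S := hcross2 haS hxS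
          rw [hFn2 _ hxaS, hFn2 _ hxS] at hx
          linear_combination hx - hgold x a - (x^(2^k+1) + a^(2^k+1)) * htwo
      calc ({x : F | Fn (x + a) + Fn x = b}).ncard
          ≤ ({x : F | a * x ^ 2^k + a ^ 2^k * x = b + a^(2^k+1)}).ncard :=
            Set.ncard_le_ncard hsub (Set.toFinite _)
        _ ≤ 4 := hLbound a ha _
        _ ≤ 6 := by norm_num
  · -- a ∉ S
    set u : F := ψ a + a with hu
    have huS : u ∉ S := hnotSu a haS
    have hu0 : u ≠ 0 := fun h => huS (h ▸ hS0)
    have hcond : ∀ x ∈ S, Fn (x + a) + Fn x = b →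
        u * (x+a) ^ 2^k + u ^ 2^k * (x+a) = ψ b + b + u^(2^k+1) := by
      intro x hxS hx
      have hxaS : x + a ∉ S := hcross haS hxS
      rw [hFn2 _ hxaS, hFn1 _ hxS] at hx
      have hfxS : ψ (f x) = f x := (hmem _).1 (hfS x hxS)
      have hψx : ψ x = x := (hmem x).1 hxS
      have hx2 : (x + ψ a) ^ (2^k+1) + f x = ψ b := by
        have h := congrArg ψ hx
        simpa [map_add, map_pow, hfxS, hψx] using h
      have hxu : x + ψ a = (x + a) + u := by
        linear_combination (-a) * htwo
      rw [hxu, hgold (x+a) u] at hx2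
      linear_combination hx2 - hx - (b + u^(2^k+1)) * htwo
    have hkey : ∀ x ∈ S, Fn (x + a) + Fn x = b →
        ∀ x' ∈ S, Fn (x' + a) + Fn x' = b → x = x' := by
      intro x hxS hx x' hxS' hx'
      have h1 := hcond x hxS hx
      have h2 := hcond x' hxS' hx'
      have hw2 : x + x' = (x + a) + (x' + a) := by
        linear_combination (-a) * htwo
      have hwc : (x + x') ^ 2^k = (x+a) ^ 2^k + (x'+a) ^ 2^k := by
        rw [hw2]
        exact add_pow_char_pow (x+a) (x'+a) 2 k
      have hker0 : u * (x + x') ^ 2^k + u ^ 2^k * (x + x') = 0 := by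
        linear_combination h1 + h2 + u * hwc + u^(2^k) * hw2 + (ψ b + b + u^(2^k+1)) * htwo
      obtain ⟨ω, hω4, hωw⟩ := hker u (x + x') hu0 hker0
      have hωS : ω ∈ S := h4S ω hω4
      rcases eq_or_ne ω 0 with rfl | hω0
      · have hw0 : x + x' = 0 := by rw [hωw]; ring
        linear_combination hw0 - x' * htwo
      · exfalso
        have huw : u = (x + x') * ω⁻¹ := by
          rw [hωw]; field_simp
        exact huS (huw ▸ hSmul (hSadd hxS hxS') (hSinv hωS))
    have hA1 : ({x : F | x ∈ S ∧ Fn (x + a) + Fn x = b}).ncard ≤ 1 := by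
      rcases Set.eq_empty_or_nonempty {x : F | x ∈ S ∧ Fn (x + a) + Fn x = b} with he | ⟨x0, hx0⟩
      · rw [he]; simp
      · have hsub : {x : F | x ∈ S ∧ Fn (x + a) + Fn x = b} ⊆ {x0} := by
          intro x hx
          have := hkey x hx.1 hx.2 x0 hx0.1 hx0.2
          simp [this]
        exact le_trans (Set.ncard_le_ncard hsub (Set.finite_singleton _)) (by simp)
    have hB1 : ({x : F | x ∉ S ∧ x + a ∈ S ∧ Fn (x + a) + Fn x = b}).ncard ≤ 1 := by
      have himg : {x : F | x ∉ S ∧ x + a ∈ S ∧ Fn (x + a) + Fn x = b}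
          ⊆ (fun y : F => y + a) '' {x : F | x ∈ S ∧ Fn (x + a) + Fn x = b} := by
        intro x hx
        have hxa : (x + a) + a = x := by linear_combination a * htwo
        refine ⟨x + a, ⟨hx.2.1, ?_⟩, hxa⟩
        rw [hxa]
        rw [add_comm]
        exact hx.2.2
      calc ({x : F | x ∉ S ∧ x + a ∈ S ∧ Fn (x + a) + Fn x = b}).ncard
          ≤ ((fun y : F => y + a) '' {x : F | x ∈ S ∧ Fn (x + a) + Fn x = b}).ncard :=
            Set.ncard_le_ncard himg (Set.toFinite _)
        _ = ({x : F | x ∈ S ∧ Fn (x + a) + Fn x = b}).ncard :=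
            Set.ncard_image_of_injective _ (add_left_injective a)
        _ ≤ 1 := hA1
    have hC1 : ({x : F | x ∉ S ∧ x + a ∉ S ∧ Fn (x + a) + Fn x = b}).ncard ≤ 4 := by
      have hsub : {x : F | x ∉ S ∧ x + a ∉ S ∧ Fn (x + a) + Fn x = b}
          ⊆ {x : F | a * x ^ 2^k + a ^ 2^k * x = b + a^(2^k+1)} := by
        intro x hx
        obtain ⟨hxS, hxaS, hx⟩ := hx
        rw [hFn2 _ hxaS, hFn2 _ hxS] at hx
        simp only [Set.mem_setOf_eq]
        linear_combination hx - hgold x a - (x^(2^k+1) + a^(2^k+1)) * htwo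
      exact le_trans (Set.ncard_le_ncard hsub (Set.toFinite _)) (hLbound a ha _)
    have hU : {x : F | Fn (x + a) + Fn x = b}
        ⊆ {x : F | x ∈ S ∧ Fn (x + a) + Fn x = b}
          ∪ {x : F | x ∉ S ∧ x + a ∈ S ∧ Fn (x + a) + Fn x = b}
          ∪ {x : F | x ∉ S ∧ x + a ∉ S ∧ Fn (x + a) + Fn x = b} := by
      intro x hx
      by_cases hxS : x ∈ S
      · exact Or.inl (Or.inl ⟨hxS, hx⟩)
      · by_cases hxaS : x + a ∈ S
        · exact Or.inl (Or.inr ⟨hxS, hxaS, hx⟩)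
        · exact Or.inr ⟨hxS, hxaS, hx⟩
    calc ({x : F | Fn (x + a) + Fn x = b}).ncard
        ≤ ({x : F | x ∈ S ∧ Fn (x + a) + Fn x = b}
          ∪ {x : F | x ∉ S ∧ x + a ∈ S ∧ Fn (x + a) + Fn x = b}
          ∪ {x : F | x ∉ S ∧ x + a ∉ S ∧ Fn (x + a) + Fn x = b}).ncard :=
          Set.ncard_le_ncard hU (Set.toFinite _)
      _ ≤ ({x : F | x ∈ S ∧ Fn (x + a) + Fn x = b}
          ∪ {x : F | x ∉ S ∧ x + a ∈ S ∧ Fn (x + a) + Fn x = b}).ncard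
          + ({x : F | x ∉ S ∧ x + a ∉ S ∧ Fn (x + a) + Fn x = b}).ncard :=
          Set.ncard_union_le _ _
      _ ≤ ({x : F | x ∈ S ∧ Fn (x + a) + Fn x = b}).ncard
          + ({x : F | x ∉ S ∧ x + a ∈ S ∧ Fn (x + a) + Fn x = b}).ncard
          + ({x : F | x ∉ S ∧ x + a ∉ S ∧ Fn (x + a) + Fn x = b}).ncard := by
          have := Set.ncard_union_le {x : F | x ∈ S ∧ Fn (x + a) + Fn x = b}
            {x : F | x ∉ S ∧ x + a ∈ S ∧ Fn (x + a) + Fn x = b}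
          omega
      _ ≤ 1 + 1 + 4 := by
          have := hA1; have := hB1; have := hC1; omega
      _ = 6 := by norm_num
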